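/- Let G be a second-countable Hausdorff ample groupoid, R a unital commutative ring, A an R-algebra, and π : A_R(G) → A a ring homomorphism. Then π is injective if and only if the restriction of π to A_R(Iso(G)°) is injective, where Iso(G)° is the interior of the isotropy bundle Iso(G)={γ∈G : d(γ)=r(γ)} (an open subgroupoid of G, itself Hausdorff and ample) and A_R(Iso(G)°) is identified with the subalgebra of A_R(G) spanned by characteristic functions of compact open bisections contained in Iso(G)°. -/

import Mathlib

open Set Function

/-- A groupoid structure on a type `G`: a small category in which every morphism is
invertible, encoded with a total multiplication `mul` that is only meaningful on
composable pairs.  Here `d x = x⁻¹x` and `r x = xx⁻¹`, and a pair `(x, y)` is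
composable exactly when `d x = r y`. -/
structure GroupoidStr (G : Type*) where
  mul : G → G → G
  inv : G → G
  inv_inv : ∀ x, inv (inv x) = x
  /-- `x · d x = x` -/
  mul_d : ∀ x, mul x (mul (inv x) x) = x
  /-- `r x · x = x` -/
  r_mul : ∀ x, mul (mul x (inv x)) x = x
  /-- associativity on composable pairs -/
  assoc : ∀ x y z, mul (inv x) x = mul y (inv y) → mul (inv y) y = mul z (inv z) →
    mul (mul x y) z = mul x (mul y z)
  /-- `d (xy) = d y` for composable `x, y` -/
  d_comp : ∀ x y, mul (inv x) x = mul y (inv y) →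
    mul (inv (mul x y)) (mul x y) = mul (inv y) y
  /-- `r (xy) = r x` for composable `x, y` -/
  r_comp : ∀ x y, mul (inv x) x = mul y (inv y) →
    mul (mul x y) (inv (mul x y)) = mul x (inv x)
  /-- `(xy)⁻¹ = y⁻¹x⁻¹` for composable `x, y` -/
  inv_mul : ∀ x y, mul (inv x) x = mul y (inv y) → inv (mul x y) = mul (inv y) (inv x)
  /-- units are their own inverses -/
  unit_self_inv : ∀ x, inv (mul (inv x) x) = mul (inv x) x
  /-- units are idempotents -/
  unit_idem : ∀ x, mul (mul (inv x) x) (mul (inv x) x) = mul (inv x) x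

namespace GroupoidStr

variable {G : Type*} (S : GroupoidStr G)

/-- The domain (source) `d x = x⁻¹ x` of `x`. -/
def d (x : G) : G := S.mul (S.inv x) x

/-- The range `r x = x x⁻¹` of `x`. -/
def r (x : G) : G := S.mul x (S.inv x)

/-- The unit space `G⁰ = d(G) = r(G)`. -/
def unitSpace : Set G := Set.range S.d

/-- The isotropy bundle `Iso(G) = {x | d x = r x}`. -/
def IsoSet : Set G := {x | S.d x = S.r x}

/-- The orbit of a unit `u`: `{r γ : d γ = u}`. -/
def orbit (u : G) : Set G := S.r '' {γ : G | S.d γ = u}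

/-- A subset `U` of the unit space is invariant if `d γ ∈ U` implies `r γ ∈ U`. -/
def IsInvariant (U : Set G) : Prop := ∀ γ : G, S.d γ ∈ U → S.r γ ∈ U

section Top

variable [TopologicalSpace G]

/-- `G` is a topological groupoid: inversion and composition (on the set of composable
pairs, with the relative product topology) are continuous. -/
def IsTopological : Prop :=
  Continuous S.inv ∧
    Continuous fun p : {p : G × G // S.d p.1 = S.r p.2} => S.mul p.1.1 p.1.2

/-- An open bisection: an open set on which both `d` and `r` restrict to homeomorphisms
onto open subsets of the unit space. -/
def IsOpenBisection (U : Set G) : Prop :=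
  IsOpen U ∧ Set.InjOn S.d U ∧ Set.InjOn S.r U ∧
    (∀ V ⊆ U, IsOpen V → IsOpen (S.d '' V)) ∧ (∀ V ⊆ U, IsOpen V → IsOpen (S.r '' V))

/-- An étale groupoid: there is a basis of open bisections (equivalently, `d` is a local
homeomorphism). -/
def IsEtale : Prop := ∀ x : G, ∃ U, x ∈ U ∧ S.IsOpenBisection U

/-- An ample groupoid: there is a basis of compact open bisections. -/
def IsAmple : Prop :=
  ∀ (x : G) (W : Set G), x ∈ W → IsOpen W →
    ∃ U, x ∈ U ∧ U ⊆ W ∧ IsCompact U ∧ S.IsOpenBisection U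

def IsCompactOpenBisection (U : Set G) : Prop := IsCompact U ∧ S.IsOpenBisection U

/-- `G` is effective if the interior of the isotropy bundle is the unit space. -/
def IsEffective : Prop := interior S.IsoSet = S.unitSpace

variable (R : Type*) [CommRing R]

/-- The underlying set of the Steinberg algebra `A_R(G)`: locally constant,
compactly supported `R`-valued functions on `G`.  (The groupoid structure argument is
only used for the `A_R(G)` notation `S.SteinSet R`.) -/
def SteinSet (_Sg : GroupoidStr G) : Set (G → R) :=
  {f | IsLocallyConstant f ∧ HasCompactSupport f}

variable {R}

/-- Convolution: `(f * g) γ = ∑_{αβ = γ} f α * g β`. -/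
noncomputable def conv (f g : G → R) : G → R := fun γ =>
  ∑ᶠ p ∈ {p : G × G | S.d p.1 = S.r p.2 ∧ S.mul p.1 p.2 = γ}, f p.1 * g p.2

end Top

end GroupoidStr


/- ===================== auxiliary development ===================== -/

set_option linter.unusedSectionVars false

namespace GroupoidStr

variable {G : Type*} (S : GroupoidStr G)

lemma d_inv (x : G) : S.d (S.inv x) = S.r x := by
  simp [d, r, S.inv_inv]

lemma r_inv (x : G) : S.r (S.inv x) = S.d x := by
  simp [d, r, S.inv_inv]

lemma mul_d' (x : G) : S.mul x (S.d x) = x := S.mul_d x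
lemma r_mul' (x : G) : S.mul (S.r x) x = x := S.r_mul x

lemma d_unit (z : G) : S.d (S.d z) = S.d z := by
  have h := S.unit_self_inv z
  simp only [d]
  rw [h]
  exact S.unit_idem z

lemma r_unit (z : G) : S.r (S.d z) = S.d z := by
  have h := S.unit_self_inv z
  simp only [r, d]
  rw [h]
  exact S.unit_idem z

lemma d_eq_self_of_unit {u : G} (hu : u ∈ S.unitSpace) : S.d u = u := by
  obtain ⟨z, rfl⟩ := hu; exact S.d_unit z

lemma r_eq_self_of_unit {u : G} (hu : u ∈ S.unitSpace) : S.r u = u := by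
  obtain ⟨z, rfl⟩ := hu; exact S.r_unit z

lemma d_mem_unitSpace (x : G) : S.d x ∈ S.unitSpace := ⟨x, rfl⟩
lemma r_mem_unitSpace (x : G) : S.r x ∈ S.unitSpace := ⟨S.inv x, S.d_inv x⟩

/-- `d γ = r γ'` iff composable; restatement for assoc hypotheses. -/
lemma comp_iff {x y : G} : S.d x = S.r y ↔ S.mul (S.inv x) x = S.mul y (S.inv y) :=
  Iff.rfl

lemma d_comp' {x y : G} (h : S.d x = S.r y) : S.d (S.mul x y) = S.d y := S.d_comp x y h
lemma r_comp' {x y : G} (h : S.d x = S.r y) : S.r (S.mul x y) = S.r x := S.r_comp x y h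

lemma inv_mul_cancel_left {x y : G} (h : S.d x = S.r y) :
    S.mul (S.inv x) (S.mul x y) = y := by
  have h1 : S.d (S.inv x) = S.r x := S.d_inv x
  have := S.assoc (S.inv x) x y h1 h
  rw [← this]
  show S.mul (S.d x) y = y
  rw [h]; exact S.r_mul' y

lemma mul_inv_cancel_left {x y : G} (h : S.r x = S.r y) :
    S.mul x (S.mul (S.inv x) y) = y := by
  have := S.inv_mul_cancel_left (x := S.inv x) (y := y) (by rw [S.d_inv]; exact h)
  rwa [S.inv_inv] at this

/-- units in iso interior: `unitSpace ⊆ IsoSet` -/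
lemma unit_mem_iso {u : G} (hu : u ∈ S.unitSpace) : u ∈ S.IsoSet := by
  simp only [IsoSet, mem_setOf_eq, S.d_eq_self_of_unit hu, S.r_eq_self_of_unit hu]



section Top

variable [TopologicalSpace G]

/- ---- topology auxiliary ---- -/

variable {S}

lemma IsTopological.continuous_inv (hTop : S.IsTopological) : Continuous S.inv := hTop.1

lemma IsTopological.continuous_d (hTop : S.IsTopological) : Continuous S.d := by
  have h : Continuous fun x : G => (⟨(S.inv x, x), S.d_inv x⟩ :
      {p : G × G // S.d p.1 = S.r p.2}) :=
    Continuous.subtype_mk (by exact (hTop.1.prodMk continuous_id)) _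
  exact hTop.2.comp h

lemma IsTopological.continuous_r (hTop : S.IsTopological) : Continuous S.r := by
  have h : Continuous fun x : G => (⟨(x, S.inv x), by rw [S.r_inv]⟩ :
      {p : G × G // S.d p.1 = S.r p.2}) :=
    Continuous.subtype_mk (by exact (continuous_id.prodMk hTop.1)) _
  exact hTop.2.comp h

lemma isClosed_iso [T2Space G] (hTop : S.IsTopological) : IsClosed S.IsoSet :=
  isClosed_eq hTop.continuous_d hTop.continuous_r

/-- the canonical section of `d` over a bisection. -/
noncomputable def sec [Nonempty G] (S : GroupoidStr G) (C : Set G) : G → G :=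
  Function.invFunOn S.d C

variable [Nonempty G]

lemma sec_mem {C : Set G} {u : G} (hu : u ∈ S.d '' C) : S.sec C u ∈ C := by
  obtain ⟨c, hc, rfl⟩ := hu
  exact Function.invFunOn_mem ⟨c, hc, rfl⟩

lemma d_sec {C : Set G} {u : G} (hu : u ∈ S.d '' C) : S.d (S.sec C u) = u := by
  obtain ⟨c, hc, rfl⟩ := hu
  exact Function.invFunOn_eq ⟨c, hc, rfl⟩

lemma sec_eq (hC : Set.InjOn S.d C) {u b : G} (hb : b ∈ C) (hdb : S.d b = u) :
    S.sec C u = b := by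
  have h1 : S.sec C u ∈ C := sec_mem ⟨b, hb, hdb⟩
  have h2 : S.d (S.sec C u) = u := d_sec ⟨b, hb, hdb⟩
  exact hC h1 hb (by rw [h2, hdb])

lemma sec_continuousOn {C : Set G} (hC : S.IsOpenBisection C) :
    ContinuousOn (S.sec C) (S.d '' C) := by
  rw [continuousOn_iff]
  rintro x hx t ht hxt
  refine ⟨S.d '' (t ∩ C), hC.2.2.2.1 _ inter_subset_right (ht.inter hC.1), ?_, ?_⟩
  · obtain ⟨c, hc, rfl⟩ := hx
    have : S.sec C (S.d c) = c := sec_eq hC.2.1 hc rfl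
    exact ⟨c, ⟨by rwa [← this], hc⟩, rfl⟩
  · rintro y ⟨⟨c, ⟨hct, hcC⟩, rfl⟩, -⟩
    have : S.sec C (S.d c) = c := sec_eq hC.2.1 hcC rfl
    simpa [Set.mem_preimage, this] using hct

/- ---- convolution formulas ---- -/

variable [T2Space G] {R : Type*} [CommRing R]

lemma conv_indicator_right_unit {V : Set G} (hV : V ⊆ S.unitSpace) (k : G → R) (γ : G) :
    S.conv k (Set.indicator V (fun _ => (1:R))) γ = (S.d ⁻¹' V).indicator k γ := by
  classical
  rw [conv, finsum_mem_def]
  have key : ∀ p : G × G, p ∈ {p : G × G | S.d p.1 = S.r p.2 ∧ S.mul p.1 p.2 = γ} →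
      p.2 ∈ V → p = (γ, S.d γ) := by
    rintro p ⟨hcomp, hmul⟩ hbV
    have hbu : S.r p.2 = p.2 := S.r_eq_self_of_unit (hV hbV)
    have hb : p.2 = S.d p.1 := by rw [← hbu]; exact hcomp.symm
    have ha : p.1 = γ := by
      rw [← hmul]
      conv_lhs => rw [← S.mul_d' p.1]
      rw [hb]
    exact Prod.ext ha (by rw [hb, ha])
  by_cases hdV : γ ∈ S.d ⁻¹' V
  · rw [Set.indicator_of_mem hdV]
    rw [finsum_eq_single _ ((γ, S.d γ) : G × G)]
    · have hmem : ((γ, S.d γ) : G × G) ∈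
          {p : G × G | S.d p.1 = S.r p.2 ∧ S.mul p.1 p.2 = γ} := by
        refine ⟨?_, S.mul_d' γ⟩
        show S.d γ = S.r (S.d γ)
        rw [S.r_eq_self_of_unit (S.d_mem_unitSpace γ)]
      rw [Set.indicator_of_mem hmem]
      show k γ * Set.indicator V _ (S.d γ) = k γ
      rw [Set.indicator_of_mem (show S.d γ ∈ V from hdV), mul_one]
    · intro p hp
      by_cases hpmem : p ∈ {p : G × G | S.d p.1 = S.r p.2 ∧ S.mul p.1 p.2 = γ}
      · rw [Set.indicator_of_mem hpmem]
        by_cases hbV : p.2 ∈ V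
        · exact absurd (key p hpmem hbV) hp
        · show k p.1 * Set.indicator V _ p.2 = 0
          rw [Set.indicator_of_notMem hbV, mul_zero]
      · rw [Set.indicator_of_notMem hpmem]
  · rw [Set.indicator_of_notMem hdV]
    apply finsum_eq_zero_of_forall_eq_zero
    intro p
    by_cases hpmem : p ∈ {p : G × G | S.d p.1 = S.r p.2 ∧ S.mul p.1 p.2 = γ}
    · rw [Set.indicator_of_mem hpmem]
      by_cases hbV : p.2 ∈ V
      · exact absurd (show γ ∈ S.d ⁻¹' V by
          have := key p hpmem hbV
          rw [this] at hbV
          exact hbV) hdV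
      · show k p.1 * Set.indicator V _ p.2 = 0
        rw [Set.indicator_of_notMem hbV, mul_zero]
    · rw [Set.indicator_of_notMem hpmem]

lemma conv_indicator_left_unit {V : Set G} (hV : V ⊆ S.unitSpace) (k : G → R) (γ : G) :
    S.conv (Set.indicator V (fun _ => (1:R))) k γ = (S.r ⁻¹' V).indicator k γ := by
  classical
  rw [conv, finsum_mem_def]
  have key : ∀ p : G × G, p ∈ {p : G × G | S.d p.1 = S.r p.2 ∧ S.mul p.1 p.2 = γ} →
      p.1 ∈ V → p = (S.r γ, γ) := by
    rintro p ⟨hcomp, hmul⟩ haV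
    have hau : S.d p.1 = p.1 := S.d_eq_self_of_unit (hV haV)
    have hb : p.2 = γ := by
      rw [← hmul]
      conv_lhs => rw [← S.r_mul' p.2, ← hcomp, hau]
    have ha : p.1 = S.r γ := by rw [← hau, hcomp, hb]
    exact Prod.ext ha hb
  by_cases hrV : γ ∈ S.r ⁻¹' V
  · rw [Set.indicator_of_mem hrV]
    rw [finsum_eq_single _ ((S.r γ, γ) : G × G)]
    · have hmem : ((S.r γ, γ) : G × G) ∈
          {p : G × G | S.d p.1 = S.r p.2 ∧ S.mul p.1 p.2 = γ} := by
        refine ⟨?_, S.r_mul' γ⟩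
        show S.d (S.r γ) = S.r γ
        exact S.d_eq_self_of_unit (S.r_mem_unitSpace γ)
      rw [Set.indicator_of_mem hmem]
      show Set.indicator V _ (S.r γ) * k γ = k γ
      rw [Set.indicator_of_mem (show S.r γ ∈ V from hrV), one_mul]
    · intro p hp
      by_cases hpmem : p ∈ {p : G × G | S.d p.1 = S.r p.2 ∧ S.mul p.1 p.2 = γ}
      · rw [Set.indicator_of_mem hpmem]
        by_cases haV : p.1 ∈ V
        · exact absurd (key p hpmem haV) hp
        · show Set.indicator V _ p.1 * k p.2 = 0
          rw [Set.indicator_of_notMem haV, zero_mul]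
      · rw [Set.indicator_of_notMem hpmem]
  · rw [Set.indicator_of_notMem hrV]
    apply finsum_eq_zero_of_forall_eq_zero
    intro p
    by_cases hpmem : p ∈ {p : G × G | S.d p.1 = S.r p.2 ∧ S.mul p.1 p.2 = γ}
    · rw [Set.indicator_of_mem hpmem]
      by_cases haV : p.1 ∈ V
      · exact absurd (show γ ∈ S.r ⁻¹' V by
          have := key p hpmem haV
          rw [this] at haV
          exact haV) hrV
      · show Set.indicator V _ p.1 * k p.2 = 0
        rw [Set.indicator_of_notMem haV, zero_mul]
    · rw [Set.indicator_of_notMem hpmem]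

/-- key formula for `1_{B⁻¹} * f`. -/
lemma conv_indicator_invB {B : Set G} (hBinj : Set.InjOn S.d B) (f : G → R) (γ : G) :
    (S.r γ ∉ S.d '' B → S.conv (Set.indicator (S.inv '' B) (fun _ => (1:R))) f γ = 0) ∧
    (∀ b ∈ B, S.d b = S.r γ →
      S.conv (Set.indicator (S.inv '' B) (fun _ => (1:R))) f γ = f (S.mul b γ)) := by
  classical
  have key : ∀ p : G × G, p ∈ {p : G × G | S.d p.1 = S.r p.2 ∧ S.mul p.1 p.2 = γ} →
      p.1 ∈ S.inv '' B → ∃ b ∈ B, S.d b = S.r γ ∧ p = (S.inv b, S.mul b γ) := by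
    rintro p ⟨hcomp, hmul⟩ ⟨b, hbB, hab⟩
    have hra : S.r p.1 = S.r γ := by rw [← hmul]; exact (S.r_comp' hcomp).symm
    have hdb : S.d b = S.r γ := by rw [← hra, ← hab, S.r_inv]
    refine ⟨b, hbB, hdb, ?_⟩
    have hc : p.2 = S.mul b γ := by
      have h1 : S.mul (S.inv p.1) (S.mul p.1 p.2) = p.2 := S.inv_mul_cancel_left hcomp
      rw [hmul] at h1
      rw [← h1, ← hab, S.inv_inv]
    exact Prod.ext hab.symm hc
  constructor
  · intro hno
    rw [conv, finsum_mem_def]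
    apply finsum_eq_zero_of_forall_eq_zero
    intro p
    by_cases hpmem : p ∈ {p : G × G | S.d p.1 = S.r p.2 ∧ S.mul p.1 p.2 = γ}
    · rw [Set.indicator_of_mem hpmem]
      by_cases haB : p.1 ∈ S.inv '' B
      · obtain ⟨b, hbB, hdb, -⟩ := key p hpmem haB
        exact absurd ⟨b, hbB, hdb⟩ hno
      · show Set.indicator (S.inv '' B) _ p.1 * f p.2 = 0
        rw [Set.indicator_of_notMem haB, zero_mul]
    · rw [Set.indicator_of_notMem hpmem]
  · intro b hbB hdb
    rw [conv, finsum_mem_def]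
    rw [finsum_eq_single _ ((S.inv b, S.mul b γ) : G × G)]
    · have hmem : ((S.inv b, S.mul b γ) : G × G) ∈
          {p : G × G | S.d p.1 = S.r p.2 ∧ S.mul p.1 p.2 = γ} := by
        constructor
        · show S.d (S.inv b) = S.r (S.mul b γ)
          rw [S.d_inv, S.r_comp' hdb]
        · exact S.inv_mul_cancel_left hdb
      rw [Set.indicator_of_mem hmem]
      show Set.indicator (S.inv '' B) _ (S.inv b) * f (S.mul b γ) = f (S.mul b γ)
      rw [Set.indicator_of_mem (Set.mem_image_of_mem _ hbB), one_mul]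
    · intro p hp
      by_cases hpmem : p ∈ {p : G × G | S.d p.1 = S.r p.2 ∧ S.mul p.1 p.2 = γ}
      · rw [Set.indicator_of_mem hpmem]
        by_cases haB : p.1 ∈ S.inv '' B
        · obtain ⟨b', hbB', hdb', hpeq⟩ := key p hpmem haB
          have hbb : b' = b := hBinj hbB' hbB (by rw [hdb', hdb])
          rw [hbb] at hpeq
          exact absurd hpeq hp
        · show Set.indicator (S.inv '' B) _ p.1 * f p.2 = 0
          rw [Set.indicator_of_notMem haB, zero_mul]
      · rw [Set.indicator_of_notMem hpmem]

/- ---- Steinberg set lemmas ---- -/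

lemma isLocallyConstant_indicator_clopen {Y : Type*} [Zero Y] {V : Set G}
    (hV : IsClopen V) {k : G → Y} (hk : IsLocallyConstant k) :
    IsLocallyConstant (V.indicator k) := by
  classical
  intro t
  by_cases h0 : (0:Y) ∈ t
  · have he : (V.indicator k) ⁻¹' t = (V ∩ k ⁻¹' t) ∪ Vᶜ := by
      ext x
      by_cases hx : x ∈ V <;>
        simp [Set.indicator_of_mem, Set.indicator_of_notMem, hx, h0]
    rw [he]
    exact (hV.2.inter (hk t)).union hV.1.isOpen_compl
  · have he : (V.indicator k) ⁻¹' t = V ∩ k ⁻¹' t := by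
      ext x
      by_cases hx : x ∈ V <;>
        simp [Set.indicator_of_mem, Set.indicator_of_notMem, hx, h0]
    rw [he]
    exact hV.2.inter (hk t)

lemma hasCompactSupport_of_subset {k : G → R} {K : Set G} (hK : IsCompact K)
    (h : Function.support k ⊆ K) : HasCompactSupport k := by
  rw [hasCompactSupport_def]
  exact IsCompact.of_isClosed_subset hK isClosed_closure
    (closure_minimal h hK.isClosed)

lemma indicator_one_mem_steinSet {V : Set G} (hVc : IsCompact V) (hVo : IsOpen V) :
    Set.indicator V (fun _ => (1:R)) ∈ S.SteinSet R := by
  constructor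
  · exact isLocallyConstant_indicator_clopen ⟨hVc.isClosed, hVo⟩
      (IsLocallyConstant.const 1)
  · refine hasCompactSupport_of_subset hVc ?_
    intro x hx
    by_contra hxV
    exact hx (Set.indicator_of_notMem hxV _)

lemma zero_mem_steinSet : (0 : G → R) ∈ S.SteinSet R := by
  constructor
  · exact IsLocallyConstant.const 0
  · exact hasCompactSupport_of_subset isCompact_empty (by simp)

lemma sub_mem_steinSet {f g : G → R} (hf : f ∈ S.SteinSet R) (hg : g ∈ S.SteinSet R) :
    f - g ∈ S.SteinSet R := by
  refine ⟨hf.1.sub hg.1, ?_⟩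
  refine hasCompactSupport_of_subset (hf.2.union hg.2) ?_
  intro x hx
  rcases Classical.em (f x = 0) with h | h
  · have : g x ≠ 0 := by
      intro hgx; apply hx; show f x - g x = 0; rw [h, hgx, sub_zero]
    exact Or.inr (subset_closure this)
  · exact Or.inl (subset_closure h)

/- ---- the function 1_{B⁻¹} * f ---- -/

lemma inv_image_eq_preimage (B : Set G) : S.inv '' B = S.inv ⁻¹' B := by
  ext x
  constructor
  · rintro ⟨b, hb, rfl⟩; simpa [S.inv_inv] using hb
  · intro hx; exact ⟨S.inv x, hx, S.inv_inv x⟩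

lemma conv_invB_eq_zero {B : Set G} (hBb : S.IsOpenBisection B) (f : G → R) {γ : G}
    (hγ : S.r γ ∉ S.d '' B) :
    S.conv (Set.indicator (S.inv '' B) (fun _ => (1:R))) f γ = 0 :=
  (conv_indicator_invB hBb.2.1 f γ).1 hγ

lemma conv_invB_eq_of_mem {B : Set G} (hBb : S.IsOpenBisection B) (f : G → R) {γ : G}
    (hγ : S.r γ ∈ S.d '' B) :
    S.conv (Set.indicator (S.inv '' B) (fun _ => (1:R))) f γ =
      f (S.mul (S.sec B (S.r γ)) γ) :=
  (conv_indicator_invB hBb.2.1 f γ).2 _ (sec_mem hγ) (d_sec hγ)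

/-- continuity of `γ ↦ (sec B (r γ)) · γ` on the set `r ⁻¹' (d '' B)`. -/
lemma continuous_secmul (hTop : S.IsTopological) {B : Set G}
    (hBb : S.IsOpenBisection B) :
    Continuous fun γ : (S.r ⁻¹' (S.d '' B) : Set G) =>
      S.mul (S.sec B (S.r γ.1)) γ.1 := by
  have hc1 : Continuous fun γ : (S.r ⁻¹' (S.d '' B) : Set G) => S.sec B (S.r γ.1) :=
    (sec_continuousOn hBb).comp_continuous
      (hTop.continuous_r.comp continuous_subtype_val) (fun γ => γ.2)
  have hc2 : Continuous fun γ : (S.r ⁻¹' (S.d '' B) : Set G) =>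
      (⟨(S.sec B (S.r γ.1), γ.1), by rw [d_sec γ.2]⟩ :
        {p : G × G // S.d p.1 = S.r p.2}) :=
    Continuous.subtype_mk (hc1.prodMk continuous_subtype_val) _
  exact hTop.2.comp hc2

lemma conv_invB_mem_steinSet (hTop : S.IsTopological) {B : Set G} (hBc : IsCompact B)
    (hBb : S.IsOpenBisection B) {f : G → R} (hf : f ∈ S.SteinSet R) :
    S.conv (Set.indicator (S.inv '' B) (fun _ => (1:R))) f ∈ S.SteinSet R := by
  classical
  set g := S.conv (Set.indicator (S.inv '' B) (fun _ => (1:R))) f with hg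
  have hdBo : IsOpen (S.d '' B) := hBb.2.2.2.1 B le_rfl hBb.1
  have hO : IsOpen (S.r ⁻¹' (S.d '' B)) := hdBo.preimage hTop.continuous_r
  have hOc : IsClosed (S.r ⁻¹' (S.d '' B)) :=
    ((hBc.image hTop.continuous_d).isClosed).preimage hTop.continuous_r
  set O : Set G := S.r ⁻¹' (S.d '' B) with hOdef
  have hgO : ∀ γ : O, g γ.1 = f (S.mul (S.sec B (S.r γ.1)) γ.1) := fun γ =>
    conv_invB_eq_of_mem hBb f γ.2
  have hgO' : ∀ γ : G, γ ∉ O → g γ = 0 := fun γ hγ => conv_invB_eq_zero hBb f hγ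
  constructor
  · -- locally constant
    intro t
    have hF : IsLocallyConstant fun γ : O => f (S.mul (S.sec B (S.r γ.1)) γ.1) :=
      hf.1.comp_continuous (continuous_secmul hTop hBb)
    have h1 : IsOpen {γ : O | g γ.1 ∈ t} := by
      have h := hF t
      have he : ((fun γ : O => f (S.mul (S.sec B (S.r γ.1)) γ.1)) ⁻¹' t)
          = {γ : O | g γ.1 ∈ t} := by
        ext γ
        simp only [Set.mem_preimage, Set.mem_setOf_eq, hgO γ]
      rwa [he] at h
    have h2 : IsOpen (Subtype.val '' {γ : O | g γ.1 ∈ t}) :=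
      hO.isOpenMap_subtype_val _ h1
    by_cases h0 : (0:R) ∈ t
    · have he : g ⁻¹' t = (Subtype.val '' {γ : O | g γ.1 ∈ t}) ∪ Oᶜ := by
        ext γ
        constructor
        · intro hγ
          by_cases hγO : γ ∈ O
          · exact Or.inl ⟨⟨γ, hγO⟩, hγ, rfl⟩
          · exact Or.inr hγO
        · rintro (⟨γ', hγ', rfl⟩ | hγO)
          · exact hγ'
          · show g γ ∈ t
            rw [hgO' γ hγO]; exact h0
      rw [he]
      exact h2.union hOc.isOpen_compl
    · have he : g ⁻¹' t = Subtype.val '' {γ : O | g γ.1 ∈ t} := by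
        ext γ
        constructor
        · intro hγ
          by_cases hγO : γ ∈ O
          · exact ⟨⟨γ, hγO⟩, hγ, rfl⟩
          · exact absurd (show (0:R) ∈ t by rw [← hgO' γ hγO]; exact hγ) h0
        · rintro ⟨γ', hγ', rfl⟩; exact hγ'
      rw [he]; exact h2
  · -- compact support
    have hcomp_closed : IsClosed {p : G × G | S.d p.1 = S.r p.2} :=
      isClosed_eq (hTop.continuous_d.comp continuous_fst)
        (hTop.continuous_r.comp continuous_snd)
    have hZc : IsCompact (((S.inv '' B) ×ˢ tsupport f) ∩
        {p : G × G | S.d p.1 = S.r p.2}) :=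
      ((hBc.image hTop.1).prod hf.2).inter_right hcomp_closed
    have hZ'c : IsCompact ((Subtype.val : {p : G × G // S.d p.1 = S.r p.2} → G × G) ⁻¹'
        (((S.inv '' B) ×ˢ tsupport f) ∩ {p : G × G | S.d p.1 = S.r p.2})) := by
      rw [Topology.IsEmbedding.subtypeVal.isCompact_iff,
        Set.image_preimage_eq_inter_range, Subtype.range_coe_subtype]
      exact hZc.inter_right hcomp_closed
    have hKc : IsCompact ((fun p : {p : G × G // S.d p.1 = S.r p.2} =>
        S.mul p.1.1 p.1.2) '' (Subtype.val ⁻¹'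
        (((S.inv '' B) ×ˢ tsupport f) ∩ {p : G × G | S.d p.1 = S.r p.2}))) :=
      hZ'c.image hTop.2
    refine hasCompactSupport_of_subset hKc ?_
    intro γ hγ
    by_cases hγO : γ ∈ O
    · have hbB : S.sec B (S.r γ) ∈ B := sec_mem hγO
      have hdb : S.d (S.sec B (S.r γ)) = S.r γ := d_sec hγO
      have hfb : S.mul (S.sec B (S.r γ)) γ ∈ tsupport f := by
        apply subset_closure
        show f (S.mul (S.sec B (S.r γ)) γ) ≠ 0
        rw [← conv_invB_eq_of_mem hBb f hγO]
        exact hγ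
      have hcompb : S.d (S.inv (S.sec B (S.r γ))) = S.r (S.mul (S.sec B (S.r γ)) γ) := by
        rw [S.d_inv, S.r_comp' hdb]
      refine ⟨⟨(S.inv (S.sec B (S.r γ)), S.mul (S.sec B (S.r γ)) γ), hcompb⟩,
        ⟨⟨Set.mem_image_of_mem _ hbB, hfb⟩, hcompb⟩, ?_⟩
      exact S.inv_mul_cancel_left hdb
    · exact absurd (hgO' γ hγO) hγ

/- ---- nowhere density of the isotropy boundary over a bisection ---- -/

lemma interior_bad_empty (hTop : S.IsTopological) {C : Set G}
    (hCb : S.IsOpenBisection C) :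
    interior (S.d '' (C ∩ (S.IsoSet \ interior S.IsoSet))) = ∅ := by
  by_contra hne
  obtain ⟨w, hw⟩ := Set.nonempty_iff_ne_empty.2 hne
  have hwD : w ∈ S.d '' (C ∩ (S.IsoSet \ interior S.IsoSet)) := interior_subset hw
  obtain ⟨α, ⟨hαC, hαI, hαni⟩, hdα⟩ := hwD
  apply hαni
  have hNo : IsOpen (C ∩ S.d ⁻¹' (interior (S.d '' (C ∩ (S.IsoSet \ interior S.IsoSet))))) :=
    hCb.1.inter (isOpen_interior.preimage hTop.continuous_d)
  have hNsub : C ∩ S.d ⁻¹' (interior (S.d '' (C ∩ (S.IsoSet \ interior S.IsoSet)))) ⊆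
      S.IsoSet := by
    rintro β ⟨hβC, hβd⟩
    have : S.d β ∈ S.d '' (C ∩ (S.IsoSet \ interior S.IsoSet)) := interior_subset hβd
    obtain ⟨β', ⟨hβ'C, hβ'I, -⟩, hdβ'⟩ := this
    have : β' = β := hCb.2.1 hβ'C hβC hdβ'
    rwa [← this]
  have hαN : α ∈ C ∩ S.d ⁻¹' (interior (S.d '' (C ∩ (S.IsoSet \ interior S.IsoSet)))) :=
    ⟨hαC, by rw [Set.mem_preimage, hdα]; exact hw⟩
  exact interior_maximal hNsub hNo hαN

/-- choose a good neighbourhood of a unit `u` relative to a compact open bisection. -/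
lemma exists_good_nbhd [T2Space G] (hTop : S.IsTopological) {C : Set G}
    (hCc : IsCompact C) (hCb : S.IsOpenBisection C) {u : G}
    (hu : u ∉ S.d '' (C ∩ (S.IsoSet \ interior S.IsoSet))) :
    ∃ W, IsOpen W ∧ u ∈ W ∧
      ∀ γ ∈ C, S.d γ ∈ W → S.r γ ∈ W → γ ∈ interior S.IsoSet := by
  by_cases huC : u ∈ S.d '' C
  · have hαC : S.sec C u ∈ C := sec_mem huC
    have hdα : S.d (S.sec C u) = u := d_sec huC
    by_cases hαI : S.sec C u ∈ interior S.IsoSet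
    · refine ⟨S.d '' (C ∩ interior S.IsoSet),
        hCb.2.2.2.1 _ Set.inter_subset_left (hCb.1.inter isOpen_interior),
        ⟨S.sec C u, ⟨hαC, hαI⟩, hdα⟩, ?_⟩
      rintro γ hγC hγd -
      obtain ⟨γ', ⟨hγ'C, hγ'I⟩, hdγ'⟩ := hγd
      rwa [← hCb.2.1 hγ'C hγC hdγ']
    · have hαnotIso : S.sec C u ∉ S.IsoSet := by
        intro hIso
        exact hu ⟨S.sec C u, ⟨hαC, hIso, hαI⟩, hdα⟩
      have hne : u ≠ S.r (S.sec C u) := by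
        intro h
        apply hαnotIso
        show S.d (S.sec C u) = S.r (S.sec C u)
        rw [hdα, ← h]
      obtain ⟨P, Q, hPo, hQo, huP, hrQ, hPQ⟩ := t2_separation hne
      have hφ : ContinuousOn (S.r ∘ S.sec C) (S.d '' C) :=
        hTop.continuous_r.comp_continuousOn (sec_continuousOn hCb)
      have hWo : IsOpen ((S.d '' C) ∩ (S.r ∘ S.sec C) ⁻¹' Q) :=
        hφ.isOpen_inter_preimage (hCb.2.2.2.1 C le_rfl hCb.1) hQo
      refine ⟨P ∩ ((S.d '' C) ∩ (S.r ∘ S.sec C) ⁻¹' Q), hPo.inter hWo,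
        ⟨huP, huC, hrQ⟩, ?_⟩
      rintro γ hγC ⟨hdP, -, hdQ⟩ ⟨hrP, -⟩
      exfalso
      have hsecγ : S.sec C (S.d γ) = γ := sec_eq hCb.2.1 hγC rfl
      have : S.r γ ∈ Q := by
        have := hdQ
        simpa [Function.comp, hsecγ] using this
      exact Set.disjoint_left.1 hPQ hrP this
  · refine ⟨(S.d '' C)ᶜ, (hCc.image hTop.continuous_d).isClosed.isOpen_compl, huC, ?_⟩
    intro γ hγC hγd _
    exact absurd (Set.mem_image_of_mem _ hγC) hγd

/-- avoid finitely many closed sets with empty interior. -/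
lemma exists_avoid {ι : Type*} (t : Finset ι) (D : ι → Set G)
    (hDc : ∀ i ∈ t, IsClosed (D i))
    (hD : ∀ i ∈ t, interior (D i) = ∅) {U : Set G} (hUo : IsOpen U)
    (hUne : U.Nonempty) : ∃ u ∈ U, ∀ i ∈ t, u ∉ D i := by
  classical
  induction t using Finset.induction_on generalizing U with
  | empty => obtain ⟨u, hu⟩ := hUne; exact ⟨u, hu, by simp⟩
  | @insert a s ha ih =>
    have hU' : IsOpen (U ∩ (D a)ᶜ) :=
      hUo.inter (hDc a (Finset.mem_insert_self a s)).isOpen_compl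
    have hU'ne : (U ∩ (D a)ᶜ).Nonempty := by
      rw [Set.nonempty_iff_ne_empty]
      intro hemp
      have hsub : U ⊆ D a := by
        intro x hx
        by_contra hxc
        exact Set.eq_empty_iff_forall_notMem.1 hemp x ⟨hx, hxc⟩
      have h2 : U ⊆ interior (D a) := interior_maximal hsub hUo
      rw [hD a (Finset.mem_insert_self a s)] at h2
      obtain ⟨x, hx⟩ := hUne
      exact h2 hx
    obtain ⟨u, hu, hus⟩ := ih (fun i hi => hDc i (Finset.mem_insert_of_mem hi))
      (fun i hi => hD i (Finset.mem_insert_of_mem hi)) hU' hU'ne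
    refine ⟨u, hu.1, ?_⟩
    intro i hi
    rcases Finset.mem_insert.1 hi with rfl | hi'
    · exact hu.2
    · exact hus i hi'



end Top

end GroupoidStr

open GroupoidStr in
theorem steinberg_uniqueness' {G : Type*} [TopologicalSpace G]
    (S : GroupoidStr G) [T2Space G] [SecondCountableTopology G]
    (hTop : S.IsTopological) (hAmple : S.IsAmple)
    {R : Type*} [CommRing R] {A : Type*} [Ring A] [Algebra R A]
    (π : (G → R) → A)
    (hadd : ∀ f ∈ S.SteinSet R, ∀ g ∈ S.SteinSet R, π (f + g) = π f + π g)
    (hmul : ∀ f ∈ S.SteinSet R, ∀ g ∈ S.SteinSet R, π (S.conv f g) = π f * π g) :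
    Set.InjOn π (S.SteinSet R) ↔
      Set.InjOn π {f ∈ S.SteinSet R | ∀ x : G, f x ≠ 0 → x ∈ interior S.IsoSet} := by
  classical
  rcases isEmpty_or_nonempty G with hE | hNE
  · constructor <;> intro _ <;> intro f _ g _ _ <;>
      exact funext fun x => (hE.false x).elim
  have hπ0 : π 0 = 0 := by
    have h := hadd 0 (zero_mem_steinSet) 0 (zero_mem_steinSet)
    rw [add_zero] at h
    exact (left_eq_add.1 h)
  constructor
  · exact fun hinj => hinj.mono (fun f hf => hf.1)
  · intro hinj'
    have hker' : ∀ h ∈ {f ∈ S.SteinSet R | ∀ x : G, f x ≠ 0 → x ∈ interior S.IsoSet},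
        π h = 0 → h = 0 := by
      intro h hh h0
      have h0T : (0:G→R) ∈ {f ∈ S.SteinSet R | ∀ x : G, f x ≠ 0 → x ∈ interior S.IsoSet} :=
        ⟨zero_mem_steinSet, by intro x hx; simp at hx⟩
      exact hinj' hh h0T (by rw [h0, hπ0])
    have hker : ∀ f ∈ S.SteinSet R, π f = 0 → f = 0 := by
      intro f hf hπf
      by_contra hfne
      obtain ⟨γ₀, hγ₀⟩ : ∃ x, f x ≠ 0 := Function.ne_iff.1 hfne
      -- a compact open bisection inside the fiber of `f γ₀`
      have hfiber : IsOpen {x | f x = f γ₀} := hf.1.isOpen_fiber (f γ₀)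
      obtain ⟨B, hγ₀B, hBsub, hBc, hBb⟩ :=
        hAmple γ₀ {x | f x = f γ₀} rfl hfiber
      have hBinvc : IsCompact (S.inv '' B) := hBc.image hTop.1
      have hBinvo : IsOpen (S.inv '' B) := by
        rw [S.inv_image_eq_preimage]; exact hBb.1.preimage hTop.1
      set g := S.conv (Set.indicator (S.inv '' B) (fun _ => (1:R))) f with hgdef
      have hgS : g ∈ S.SteinSet R := conv_invB_mem_steinSet hTop hBc hBb hf
      have h1BS : Set.indicator (S.inv '' B) (fun _ => (1:R)) ∈ S.SteinSet R :=
        indicator_one_mem_steinSet hBinvc hBinvo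
      have hπg : π g = 0 := by
        rw [hgdef, hmul _ h1BS f hf, hπf, mul_zero]
      -- g is nonzero on the compact open unit set d '' B
      have hUo : IsOpen (S.d '' B) := hBb.2.2.2.1 B le_rfl hBb.1
      have hUne : (S.d '' B).Nonempty := ⟨S.d γ₀, Set.mem_image_of_mem _ hγ₀B⟩
      have hUunit : S.d '' B ⊆ S.unitSpace := by
        rintro _ ⟨b, -, rfl⟩; exact S.d_mem_unitSpace b
      have hgU : ∀ u ∈ S.d '' B, g u = f γ₀ := by
        intro u huU
        have huu : S.r u = u := S.r_eq_self_of_unit (hUunit huU)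
        have hru : S.r u ∈ S.d '' B := by rw [huu]; exact huU
        have hval := conv_invB_eq_of_mem (S := S) hBb f hru
        rw [hgdef]
        rw [hval]
        have hsB : S.sec B (S.r u) ∈ B := sec_mem hru
        have hsd' : S.d (S.sec B (S.r u)) = u := by rw [d_sec hru, huu]
        set w := S.sec B (S.r u) with hwdef
        rw [← hsd', S.mul_d']
        exact hBsub hsB
      -- the support of g is compact open
      have hsuppo : IsOpen (Function.support g) := hgS.1 {y : R | y ≠ 0}
      have hsuppcl : IsClosed (Function.support g) := by
        rw [← isOpen_compl_iff]
        have hco : (Function.support g)ᶜ = g ⁻¹' {0} := by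
          ext x; simp [Function.mem_support]
        rw [hco]
        exact hgS.1 {(0:R)}
      have hsuppc : IsCompact (Function.support g) :=
        IsCompact.of_isClosed_subset (hasCompactSupport_def.1 hgS.2) hsuppcl
          subset_closure
      -- cover the support by compact open bisections
      have hcov := fun x : Function.support g =>
        hAmple x.1 (Function.support g) x.2 hsuppo
      choose C hCmem hCsub hCc hCb using hcov
      obtain ⟨t, ht⟩ := hsuppc.elim_finite_subcover C (fun i => (hCb i).1)
        (fun x hx => Set.mem_iUnion.2 ⟨⟨x, hx⟩, hCmem ⟨x, hx⟩⟩)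
      -- avoid the bad sets
      have hIsoCl : IsClosed S.IsoSet := isClosed_iso hTop
      have hDc : ∀ i ∈ t, IsClosed (S.d '' (C i ∩ (S.IsoSet \ interior S.IsoSet))) := by
        intro i _
        have hcpt : IsCompact (C i ∩ (S.IsoSet \ interior S.IsoSet)) :=
          (hCc i).inter_right (hIsoCl.sdiff isOpen_interior)
        exact (hcpt.image hTop.continuous_d).isClosed
      have hDint : ∀ i ∈ t,
          interior (S.d '' (C i ∩ (S.IsoSet \ interior S.IsoSet))) = ∅ :=
        fun i _ => interior_bad_empty hTop (hCb i)
      obtain ⟨u, huU, huD⟩ := exists_avoid t _ hDc hDint hUo hUne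
      -- good neighbourhoods
      have hW := fun i (hi : i ∈ t) =>
        exists_good_nbhd hTop (hCc i) (hCb i) (huD i hi)
      choose! W hWo hWu hWprop using hW
      have hWWo : IsOpen ((S.d '' B) ∩ ⋂ i ∈ t, W i) :=
        hUo.inter (isOpen_biInter_finset (fun i hi => hWo i hi))
      have huWW : u ∈ (S.d '' B) ∩ ⋂ i ∈ t, W i :=
        ⟨huU, Set.mem_biInter (fun i hi => hWu i hi)⟩
      obtain ⟨V, huV, hVsub, hVc, hVb⟩ := hAmple u _ huWW hWWo
      have hVunit : V ⊆ S.unitSpace := fun v hv => hUunit (hVsub hv).1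
      have hVo : IsOpen V := hVb.1
      have hVclopen : IsClopen V := ⟨hVc.isClosed, hVo⟩
      -- the compressed function h = 1_V * g * 1_V
      set k₁ := S.conv g (Set.indicator V (fun _ => (1:R))) with hk₁def
      set h := S.conv (Set.indicator V (fun _ => (1:R))) k₁ with hhdef
      have h1VS : Set.indicator V (fun _ => (1:R)) ∈ S.SteinSet R :=
        indicator_one_mem_steinSet hVc hVo
      have hk₁eq : ∀ γ, k₁ γ = (S.d ⁻¹' V).indicator g γ := fun γ => by
        rw [hk₁def]; exact conv_indicator_right_unit hVunit g γ
      have hk₁fun : k₁ = (S.d ⁻¹' V).indicator g := funext hk₁eq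
      have hk₁S : k₁ ∈ S.SteinSet R := by
        rw [hk₁fun]
        constructor
        · exact isLocallyConstant_indicator_clopen
            (hVclopen.preimage hTop.continuous_d) hgS.1
        · refine hasCompactSupport_of_subset (hasCompactSupport_def.1 hgS.2) ?_
          intro x hx
          apply subset_closure
          intro hgx
          apply hx
          show (S.d ⁻¹' V).indicator g x = 0
          by_cases hm : x ∈ S.d ⁻¹' V
          · rw [Set.indicator_of_mem hm, hgx]
          · rw [Set.indicator_of_notMem hm]
      have hheq : ∀ γ, h γ = (S.r ⁻¹' V).indicator k₁ γ := fun γ => by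
        rw [hhdef]; exact conv_indicator_left_unit hVunit k₁ γ
      have hhfun : h = (S.r ⁻¹' V).indicator k₁ := funext hheq
      have hhS : h ∈ S.SteinSet R := by
        rw [hhfun]
        constructor
        · exact isLocallyConstant_indicator_clopen
            (hVclopen.preimage hTop.continuous_r) hk₁S.1
        · refine hasCompactSupport_of_subset (hasCompactSupport_def.1 hk₁S.2) ?_
          intro x hx
          apply subset_closure
          intro hkx
          apply hx
          show (S.r ⁻¹' V).indicator k₁ x = 0
          by_cases hm : x ∈ S.r ⁻¹' V
          · rw [Set.indicator_of_mem hm, hkx]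
          · rw [Set.indicator_of_notMem hm]
      have hπh : π h = 0 := by
        rw [hhdef, hmul _ h1VS k₁ hk₁S, hk₁def, hmul g hgS _ h1VS, hπg, zero_mul,
          mul_zero]
      -- h is supported in the interior of the isotropy
      have hhT' : h ∈ {f ∈ S.SteinSet R | ∀ x : G, f x ≠ 0 → x ∈ interior S.IsoSet} := by
        refine ⟨hhS, ?_⟩
        intro x hx
        rw [hheq x] at hx
        by_cases hmr : x ∈ S.r ⁻¹' V
        swap
        · rw [Set.indicator_of_notMem hmr] at hx; exact absurd rfl hx
        rw [Set.indicator_of_mem hmr, hk₁eq x] at hx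
        by_cases hmd : x ∈ S.d ⁻¹' V
        swap
        · rw [Set.indicator_of_notMem hmd] at hx; exact absurd rfl hx
        rw [Set.indicator_of_mem hmd] at hx
        -- x is in the support of g, hence in some C i
        have hxsupp : x ∈ Function.support g := hx
        have hxcov := ht hxsupp
        rw [Set.mem_iUnion₂] at hxcov
        obtain ⟨i, hit, hxCi⟩ := hxcov
        have hdW : S.d x ∈ W i := by
          have := (hVsub hmd).2
          exact Set.mem_iInter₂.1 this i hit
        have hrW : S.r x ∈ W i := by
          have := (hVsub hmr).2
          exact Set.mem_iInter₂.1 this i hit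
        exact hWprop i hit x hxCi hdW hrW
      -- h is nonzero at u
      have huunit : u ∈ S.unitSpace := hUunit huU
      have hhu : h u ≠ 0 := by
        rw [hheq u, Set.indicator_of_mem
          (show u ∈ S.r ⁻¹' V by
            rw [Set.mem_preimage, S.r_eq_self_of_unit huunit]; exact huV),
          hk₁eq u, Set.indicator_of_mem
          (show u ∈ S.d ⁻¹' V by
            rw [Set.mem_preimage, S.d_eq_self_of_unit huunit]; exact huV),
          hgU u huU]
        exact hγ₀
      have := congrFun (hker' h hhT' hπh) u
      exact hhu this
    -- conclude injectivity from the kernel property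
    intro f hf g hg hfg
    have hsubm : f - g ∈ S.SteinSet R := sub_mem_steinSet hf hg
    have hsum : π (f - g) + π g = π f := by
      rw [← hadd _ hsubm _ hg, sub_add_cancel]
    have hπfg : π (f - g) = 0 := by
      rw [hfg] at hsum
      exact add_eq_right.1 hsum
    exact sub_eq_zero.1 (hker _ hsubm hπfg)


/-- Uniqueness theorem, `[CEP, Theorem 3.1]`. Let `G` be a
second-countable Hausdorff ample groupoid, `R` a unital commutative ring, `A` an
`R`-algebra and `π : A_R(G) → A` a ring homomorphism.  Then `π` is injective iff its
restriction to `A_R(Iso(G)°)` — the subalgebra of functions supported in the interior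
of the isotropy bundle — is injective. -/
theorem steinberg_uniqueness {G : Type*} [TopologicalSpace G]
    (S : GroupoidStr G) [T2Space G] [SecondCountableTopology G]
    (hTop : S.IsTopological) (hAmple : S.IsAmple)
    {R : Type*} [CommRing R] {A : Type*} [Ring A] [Algebra R A]
    (π : (G → R) → A)
    (hadd : ∀ f ∈ S.SteinSet R, ∀ g ∈ S.SteinSet R, π (f + g) = π f + π g)
    (hmul : ∀ f ∈ S.SteinSet R, ∀ g ∈ S.SteinSet R, π (S.conv f g) = π f * π g) :
    Set.InjOn π (S.SteinSet R) ↔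
      Set.InjOn π {f ∈ S.SteinSet R | ∀ x : G, f x ≠ 0 → x ∈ interior S.IsoSet} := by
  exact steinberg_uniqueness' S hTop hAmple π hadd hmul
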